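/- Let ρ be a Borel probability measure on ℝ and E_ρ the associated position observable on L²(ℝ). Then E_ρ is a projection valued measure (i.e. E_ρ(X)² = E_ρ(X) for all Borel X) if and only if ρ = δ_t for some t ∈ ℝ. -/

import Mathlib

open MeasureTheory Complex

open Set Filter Topology ENNReal

noncomputable section

/-- `L²(ℝ)` with Lebesgue measure. -/
abbrev L2 : Type := Lp ℂ 2 (volume : Measure ℝ)

/-- `T` is the operator of multiplication by the bounded function `x ↦ ρ(X − x)`. -/
def IsMulByMeas (ρ : Measure ℝ) (X : Set ℝ) (T : L2 →L[ℂ] L2) : Prop :=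
  ∀ f : L2, (T f : ℝ → ℂ) =ᵐ[volume]
    fun x => ((ρ ((· + x) ⁻¹' X)).toReal : ℂ) * (f : ℝ → ℂ) x

/-- If the cdf of a probability measure takes only values 0 and 1 a.e., it's a Dirac measure. -/
lemma dirac_of_cdf_dichotomy (ρ : Measure ℝ) [IsProbabilityMeasure ρ]
    (h : ∀ᵐ s : ℝ, ρ (Iic s) = 0 ∨ ρ (Iic s) = 1) :
    ∃ t : ℝ, ρ = Measure.dirac t := by
  set G : Set ℝ := {s | ρ (Iic s) = 0 ∨ ρ (Iic s) = 1} with hG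
  have hGc : volume Gᶜ = 0 := h
  -- G meets every interval of positive volume
  have hGmeet : ∀ (I : Set ℝ), volume I ≠ 0 → (G ∩ I).Nonempty := by
    intro I hI
    by_contra hempty
    rw [not_nonempty_iff_eq_empty] at hempty
    have : I ⊆ Gᶜ := by
      intro x hx
      by_contra hxG
      simp only [mem_compl_iff, not_not] at hxG
      exact absurd (Set.eq_empty_iff_forall_notMem.1 hempty x ⟨hxG, hx⟩) (fun h => h)
    exact hI (measure_mono_null this hGc)
  have hmono : Monotone fun s : ℝ => ρ (Iic s) := fun a b hab => measure_mono (Iic_subset_Iic.2 hab)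
  -- the set A where cdf = 1
  set A : Set ℝ := {s | ρ (Iic s) = 1} with hA
  -- A is nonempty
  have hAne : A.Nonempty := by
    by_contra hne
    rw [not_nonempty_iff_eq_empty] at hne
    have h0 : ∀ s ∈ G, ρ (Iic s) = 0 := by
      intro s hs
      rcases hs with h0 | h1
      · exact h0
      · exact absurd (show s ∈ A from h1) (by simp [hne])
    have : ∀ x : ℝ, ρ (Iic x) = 0 := by
      intro x
      obtain ⟨s, hsG, hsI⟩ := hGmeet (Ioi x) (by simp [Real.volume_Ioi])
      exact le_antisymm (le_trans (hmono (le_of_lt hsI)) (h0 s hsG).le) zero_le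
    have h1 : Tendsto (fun x : ℝ => ρ (Iic x)) atTop (𝓝 (ρ univ)) := tendsto_measure_Iic_atTop ρ
    have h2 : Tendsto (fun x : ℝ => ρ (Iic x)) atTop (𝓝 0) := by
      simp only [this]; exact tendsto_const_nhds
    have := tendsto_nhds_unique h1 h2
    rw [measure_univ] at this
    exact one_ne_zero this
  -- ∃ b with cdf b = 0
  have hBne : ∃ b, ρ (Iic b) = 0 := by
    by_contra hne
    push_neg at hne
    have h1 : ∀ s ∈ G, ρ (Iic s) = 1 := by
      intro s hs; rcases hs with h0 | h1
      · exact absurd h0 (hne s)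
      · exact h1
    have hall : ∀ x : ℝ, ρ (Iic x) = 1 := by
      intro x
      obtain ⟨s, hsG, hsI⟩ := hGmeet (Iio x) (by simp [Real.volume_Iio])
      exact le_antisymm prob_le_one (le_trans (h1 s hsG).ge (hmono hsI.le))
    have hinter : ρ (⋂ n : ℕ, Iic (-(n:ℝ))) = 1 := by
      rw [Antitone.measure_iInter]
      · simp [hall]
      · intro a b hab
        exact Iic_subset_Iic.2 (by exact neg_le_neg (by exact_mod_cast hab))
      · exact fun i => (measurableSet_Iic).nullMeasurableSet
      · exact ⟨0, measure_ne_top ρ _⟩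
    have hempty : (⋂ n : ℕ, Iic (-(n:ℝ))) = ∅ := by
      ext x
      simp only [mem_iInter, mem_Iic, mem_empty_iff_false, iff_false, not_forall, not_le]
      obtain ⟨n, hn⟩ := exists_nat_gt (-x)
      exact ⟨n, by linarith⟩
    rw [hempty] at hinter
    simp at hinter
  obtain ⟨b, hb⟩ := hBne
  -- A is bounded below by b
  have hbdd : BddBelow A := by
    refine ⟨b, fun a ha => ?_⟩
    by_contra hab
    push_neg at hab
    have h1 : (1:ℝ≥0∞) ≤ ρ (Iic b) := ha.ge.trans (hmono hab.le)
    rw [hb] at h1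
    simp at h1
  set t := sInf A with ht
  refine ⟨t, Measure.ext_of_Iic ρ (Measure.dirac t) fun s => ?_⟩
  rcases le_or_gt t s with hts | hst
  · -- ρ (Iic s) = 1
    have h1 : ∀ u, t < u → ρ (Iic u) = 1 := by
      intro u hu
      obtain ⟨a, haA, hau⟩ := exists_lt_of_csInf_lt hAne hu
      exact le_antisymm prob_le_one (haA.ge.trans (hmono hau.le))
    have hρs : ρ (Iic s) = 1 := by
      have hiic : Iic t = ⋂ n : ℕ, Iic (t + 1/(n+1)) := by
        ext x
        simp only [mem_iInter, mem_Iic]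
        constructor
        · intro hx n; have : (0:ℝ) < 1/(n+1) := by positivity
          linarith
        · intro hx
          refine le_of_forall_pos_le_add fun ε hε => ?_
          obtain ⟨n, hn⟩ := exists_nat_one_div_lt hε
          exact (hx n).trans (by linarith)
      have hρt : ρ (Iic t) = 1 := by
        rw [hiic, Antitone.measure_iInter]
        · refine le_antisymm (iInf_le_of_le 0 prob_le_one) (le_iInf fun n => ?_)
          exact (h1 _ (lt_add_of_pos_right t (by positivity))).ge
        · intro m n hmn
          refine Iic_subset_Iic.2 (add_le_add (le_refl t) ?_)
          apply one_div_le_one_div_of_le <;> [positivity; exact_mod_cast (by exact_mod_cast add_le_add_left (Nat.cast_le.2 hmn) 1)]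
        · exact fun i => measurableSet_Iic.nullMeasurableSet
        · exact ⟨0, measure_ne_top ρ _⟩
      exact le_antisymm prob_le_one (hρt ▸ hmono hts)
    rw [hρs, Measure.dirac_apply' _ measurableSet_Iic, indicator_of_mem (mem_Iic.2 hts)]
    rfl
  · -- s < t : ρ (Iic s) = 0
    obtain ⟨u, huG, huI⟩ := hGmeet (Ioo s t) (by simp [Real.volume_Ioo]; linarith)
    have hunotA : u ∉ A := fun huA => absurd (csInf_le hbdd huA) (not_le.2 huI.2)
    have hu0 : ρ (Iic u) = 0 := huG.resolve_right hunotA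
    have : ρ (Iic s) = 0 := measure_mono_null (Iic_subset_Iic.2 huI.1.le) hu0
    rw [this, Measure.dirac_apply' _ measurableSet_Iic, indicator_of_notMem (by simp; linarith)]

/-- Forward core: if `E` is projection valued then the cdf of `ρ` takes a.e. only values 0, 1. -/
lemma stmt5_forward_ae (ρ : Measure ℝ) [IsProbabilityMeasure ρ]
    (E : Set ℝ → (L2 →L[ℂ] L2))
    (hE : ∀ X : Set ℝ, MeasurableSet X → IsMulByMeas ρ X (E X))
    (hproj : ∀ X : Set ℝ, MeasurableSet X → (E X) ∘L (E X) = E X) :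
    ∀ᵐ s : ℝ, ρ (Iic s) = 0 ∨ ρ (Iic s) = 1 := by
  set X : Set ℝ := Iic 0 with hX
  have hXm : MeasurableSet X := measurableSet_Iic
  set g : ℝ → ℝ := fun x => (ρ ((· + x) ⁻¹' X)).toReal with hg
  have key : ∀ n : ℕ, ∀ᵐ x : ℝ, x ∈ Icc (-(n:ℝ)) n → (g x : ℂ) * g x = g x := by
    intro n
    have hIcc : volume (Icc (-(n:ℝ)) n) ≠ ∞ := by
      rw [Real.volume_Icc]; exact ofReal_ne_top
    set f : L2 := indicatorConstLp 2 measurableSet_Icc hIcc (1:ℂ) with hf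
    have h1 := hE X hXm f
    have h2 := hE X hXm (E X f)
    have hco : E X (E X f) = E X f := by
      have := hproj X hXm
      calc E X (E X f) = (E X ∘L E X) f := rfl
        _ = E X f := by rw [this]
    rw [hco] at h2
    have hind : (f : ℝ → ℂ) =ᵐ[volume] (Icc (-(n:ℝ)) n).indicator fun _ => (1:ℂ) :=
      indicatorConstLp_coeFn
    filter_upwards [h1, h2, hind] with x hx1 hx2 hx3 hxmem
    rw [hx1, hx3, indicator_of_mem hxmem] at hx2
    simpa using hx2.symm
  have key2 : ∀ᵐ x : ℝ, (g x : ℂ) * g x = g x := by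
    have := ae_all_iff.2 key
    filter_upwards [this] with x hx
    obtain ⟨n, hn⟩ := exists_nat_ge |x|
    exact hx n ⟨neg_le_of_abs_le hn, le_of_abs_le hn⟩
  have key3 : ∀ᵐ x : ℝ, ρ (Iic (-x)) = 0 ∨ ρ (Iic (-x)) = 1 := by
    filter_upwards [key2] with x hx
    have hpre : (· + x) ⁻¹' X = Iic (-x) := by
      ext y
      simp only [mem_preimage, hX, mem_Iic]
      constructor <;> intro <;> linarith
    have hr : g x * g x = g x := by
      have := hx
      rw [← Complex.ofReal_mul] at this
      exact_mod_cast this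
    have : g x = 0 ∨ g x = 1 := by
      rcases mul_eq_zero.mp (show g x * (g x - 1) = 0 from by nlinarith) with h | h
      · exact Or.inl h
      · exact Or.inr (by linarith)
    rcases this with h | h
    · left
      have h' : (ρ (Iic (-x))).toReal = 0 := by rw [← hpre]; exact h
      exact ((toReal_eq_zero_iff _).mp h').resolve_right (measure_ne_top ρ _)
    · right
      have h' : (ρ (Iic (-x))).toReal = 1 := by rw [← hpre]; exact h
      exact (toReal_eq_one_iff _).mp h'
  -- change of variables x ↦ -x
  have hN : volume {x : ℝ | ¬(ρ (Iic (-x)) = 0 ∨ ρ (Iic (-x)) = 1)} = 0 := key3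
  have : {s : ℝ | ¬(ρ (Iic s) = 0 ∨ ρ (Iic s) = 1)} =
      -{x : ℝ | ¬(ρ (Iic (-x)) = 0 ∨ ρ (Iic (-x)) = 1)} := by
    ext s
    simp [Set.mem_neg]
  show volume {s : ℝ | ¬(ρ (Iic s) = 0 ∨ ρ (Iic s) = 1)} = 0
  rw [this, Measure.measure_neg]
  exact hN

/-- `E_ρ` is projection valued iff `ρ` is a Dirac measure. -/
theorem stmt5 (ρ : Measure ℝ) [IsProbabilityMeasure ρ]
    (E : Set ℝ → (L2 →L[ℂ] L2))
    (hE : ∀ X : Set ℝ, MeasurableSet X → IsMulByMeas ρ X (E X)) :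
    (∀ X : Set ℝ, MeasurableSet X → (E X) ∘L (E X) = E X) ↔
      ∃ t : ℝ, ρ = Measure.dirac t := by
  constructor
  · intro hproj
    exact dirac_of_cdf_dichotomy ρ (stmt5_forward_ae ρ E hE hproj)
  · rintro ⟨t, hρ⟩ X hX
    ext f
    have h1 := hE X hX f
    have h2 := hE X hX (E X f)
    have hco : (((E X) ∘L (E X)) f : ℝ → ℂ) = ((E X) ((E X) f) : ℝ → ℂ) := rfl
    rw [hco]
    refine h2.trans (Filter.EventuallyEq.trans ?_ h1.symm)
    filter_upwards [h1] with x hx1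
    rw [hx1]
    have hpm : MeasurableSet ((· + x) ⁻¹' X) := hX.preimage (measurable_add_const x)
    have hg : (ρ ((· + x) ⁻¹' X)).toReal = 0 ∨ (ρ ((· + x) ⁻¹' X)).toReal = 1 := by
      rw [hρ, Measure.dirac_apply' _ hpm]
      by_cases ht : t ∈ (· + x) ⁻¹' X
      · right; rw [indicator_of_mem ht]; simp
      · left; rw [indicator_of_notMem ht]; simp
    rcases hg with h | h <;> rw [h] <;> norm_num
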